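/- Let (Ω, P) be a probability space, let E be an exponential random variable with rate 1, and let T = (T1, T2) be an R²-valued random vector independent of E. Define Z_j = E + T_j - max(T1,T2) for j = 1,2, let F_j(z) = P(Z_j ≤ z) be the cdf of Z_j, let F_j^{-1}(q) = inf{z ∈ R : F_j(z) ≥ q}, and let q* = inf{q ∈ (0,1) : F_1^{-1}(q) > 0 and F_2^{-1}(q) > 0}. Set V_j = exp(T_j - max(T1,T2)) / E[exp(T_j - max(T1,T2))]. Then for every q ∈ (q*, 1), P(Z_2 > F_2^{-1}(q)) > 0 and P(Z_1 > F_1^{-1}(q) | Z_2 > F_2^{-1}(q)) = E[min(V1, V2)]; in particular the limit χ_{1,2} = lim_{q→1⁻} P(Z_1 > F_1^{-1}(q) | Z_2 > F_2^{-1}(q)) exists and equals E[min(V1, V2)]. -/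
import Mathlib

open MeasureTheory ProbabilityTheory

/-- The (right-continuous) distribution function of a real random variable `Z` under `P`. -/
noncomputable def distFun {Ω : Type*} [MeasurableSpace Ω]
    (P : Measure Ω) (Z : Ω → ℝ) (z : ℝ) : ℝ :=
  (P {ω | Z ω ≤ z}).toReal

/-- The generalized inverse (quantile function) `F⁻¹(q) = inf {z : F(z) ≥ q}`. -/
noncomputable def quantileFun {Ω : Type*} [MeasurableSpace Ω]
    (P : Measure Ω) (Z : Ω → ℝ) (q : ℝ) : ℝ :=
  sInf {z : ℝ | q ≤ distFun P Z z}

section BTDHelpers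

open Set

set_option linter.unusedSectionVars false

variable {Ω : Type*} [MeasurableSpace Ω] (P : Measure Ω) [IsProbabilityMeasure P]

lemma btd_integrable_of_le_one {f : Ω → ℝ} (hm : Measurable f) (h0 : ∀ ω, 0 ≤ f ω)
    (h1 : ∀ ω, f ω ≤ 1) : Integrable f P := by
  apply (integrable_const (1:ℝ)).mono' hm.aestronglyMeasurable
  filter_upwards with ω
  rw [Real.norm_eq_abs, abs_of_nonneg (h0 ω)]
  exact h1 ω

lemma btd_tail_indep (E : Ω → ℝ) (W : Ω → ℝ × ℝ) (hE : Measurable E) (hW : Measurable W)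
    (hExp : ∀ x : ℝ, 0 ≤ x → P {ω | x < E ω} = ENNReal.ofReal (Real.exp (-x)))
    (hI : IndepFun E W P) (g : ℝ × ℝ → ℝ) (hg : Measurable g) (hg0 : ∀ w, 0 ≤ g w) :
    P {ω | g (W ω) < E ω} = ∫⁻ ω, ENNReal.ofReal (Real.exp (-(g (W ω)))) ∂P := by
  have hmap : P.map (fun ω => (W ω, E ω)) = (P.map W).prod (P.map E) :=
    (indepFun_iff_map_prod_eq_prod_map_map hW.aemeasurable hE.aemeasurable).mp hI.symm
  have hS : MeasurableSet {p : (ℝ × ℝ) × ℝ | g p.1 < p.2} :=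
    measurableSet_lt (hg.comp measurable_fst) measurable_snd
  have h1 : P {ω | g (W ω) < E ω}
      = (P.map (fun ω => (W ω, E ω))) {p : (ℝ × ℝ) × ℝ | g p.1 < p.2} := by
    rw [Measure.map_apply (hW.prodMk hE) hS]
    rfl
  rw [h1, hmap, Measure.prod_apply hS]
  have h2 : ∀ w : ℝ × ℝ, (P.map E) (Prod.mk w ⁻¹' {p : (ℝ × ℝ) × ℝ | g p.1 < p.2})
      = ENNReal.ofReal (Real.exp (-(g w))) := by
    intro w
    have hpre : Prod.mk w ⁻¹' {p : (ℝ × ℝ) × ℝ | g p.1 < p.2} = Ioi (g w) := rfl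
    rw [hpre, Measure.map_apply hE measurableSet_Ioi]
    exact hExp (g w) (hg0 w)
  simp_rw [h2]
  exact lintegral_map (ENNReal.measurable_ofReal.comp (Real.measurable_exp.comp hg.neg)) hW

lemma btd_distFun_mono (Z : Ω → ℝ) : Monotone (distFun P Z) := by
  intro a b hab
  exact ENNReal.toReal_mono (measure_ne_top _ _)
    (measure_mono (fun ω h => le_trans h hab))

variable {Z : Ω → ℝ} {c q : ℝ}

lemma btd_exp_neg_log (hc : 0 < c) (h1q : 0 < 1 - q) :
    Real.exp (-(Real.log (c / (1 - q)))) = (1 - q) / c := by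
  rw [Real.exp_neg, Real.exp_log (by positivity)]
  rw [inv_div]

lemma btd_quantile_set_nonempty (hc : 0 < c)
    (hF : ∀ z, 0 ≤ z → distFun P Z z = 1 - Real.exp (-z) * c) (hq1 : q < 1) :
    {z : ℝ | q ≤ distFun P Z z}.Nonempty := by
  have h1q : 0 < 1 - q := by linarith
  refine ⟨max (Real.log (c / (1 - q))) 0, ?_⟩
  have hz : (0:ℝ) ≤ max (Real.log (c / (1 - q))) 0 := le_max_right _ _
  simp only [mem_setOf_eq]
  rw [hF _ hz]
  have h2 : Real.exp (-(max (Real.log (c / (1 - q))) 0)) ≤ (1 - q) / c := by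
    rw [← btd_exp_neg_log hc h1q]
    exact Real.exp_le_exp.mpr (neg_le_neg (le_max_left _ _))
  have h3 : Real.exp (-(max (Real.log (c / (1 - q))) 0)) * c ≤ 1 - q :=
    (le_div_iff₀ hc).mp h2
  linarith

lemma btd_quantileFun_eq_log (hc : 0 < c)
    (hF : ∀ z, 0 ≤ z → distFun P Z z = 1 - Real.exp (-z) * c)
    (hq : 1 - c < q) (hq1 : q < 1) :
    quantileFun P Z q = Real.log (c / (1 - q)) ∧ 0 < Real.log (c / (1 - q)) := by
  have h1q : 0 < 1 - q := by linarith
  have hrpos : 0 < Real.log (c / (1 - q)) :=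
    Real.log_pos (by rw [lt_div_iff₀ h1q]; linarith)
  have h0 : distFun P Z 0 = 1 - c := by
    rw [hF 0 le_rfl]; simp
  have hset : {z : ℝ | q ≤ distFun P Z z} = Ici (Real.log (c / (1 - q))) := by
    ext z
    simp only [mem_setOf_eq, mem_Ici]
    constructor
    · intro h
      rcases le_or_gt 0 z with hz | hz
      · rw [hF z hz] at h
        have h2 : Real.exp (-z) ≤ (1 - q) / c := by rw [le_div_iff₀ hc]; linarith
        rw [← btd_exp_neg_log hc h1q] at h2
        have h3 := Real.exp_le_exp.mp h2
        linarith
      · exfalso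
        have hm := btd_distFun_mono P Z hz.le
        rw [h0] at hm
        linarith [le_trans h hm]
    · intro h
      have hz : 0 ≤ z := le_trans hrpos.le h
      rw [hF z hz]
      have h2 : Real.exp (-z) ≤ (1 - q) / c := by
        rw [← btd_exp_neg_log hc h1q]
        exact Real.exp_le_exp.mpr (by linarith)
      have h3 : Real.exp (-z) * c ≤ 1 - q := (le_div_iff₀ hc).mp h2
      linarith
  rw [quantileFun, hset, csInf_Ici]
  exact ⟨rfl, hrpos⟩

lemma btd_quantile_pos_imp (hF : ∀ z, 0 ≤ z → distFun P Z z = 1 - Real.exp (-z) * c)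
    (hle : q ≤ 1 - c) : quantileFun P Z q ≤ 0 := by
  have h0 : distFun P Z 0 = 1 - c := by rw [hF 0 le_rfl]; simp
  have h0mem : (0:ℝ) ∈ {z : ℝ | q ≤ distFun P Z z} := by
    simp only [mem_setOf_eq, h0]; exact hle
  by_cases hb : BddBelow {z : ℝ | q ≤ distFun P Z z}
  · exact csInf_le hb h0mem
  · rw [quantileFun, Real.sInf_of_not_bddBelow hb]

lemma btd_quantile_bddBelow (hpos : 0 < quantileFun P Z q) :
    BddBelow {z : ℝ | q ≤ distFun P Z z} := by
  by_contra hb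
  rw [quantileFun, Real.sInf_of_not_bddBelow hb] at hpos
  exact lt_irrefl 0 hpos

lemma btd_exp_max_min (a b : ℝ) :
    Real.exp (-(max a b)) = min (Real.exp (-a)) (Real.exp (-b)) := by
  rcases le_total a b with h | h
  · rw [max_eq_right h, min_eq_right (Real.exp_le_exp.mpr (neg_le_neg h))]
  · rw [max_eq_left h, min_eq_left (Real.exp_le_exp.mpr (neg_le_neg h))]

variable (E T1 T2 : Ω → ℝ)

lemma btd_tail_marginal (hE : Measurable E) (hT1 : Measurable T1) (hT2 : Measurable T2)
    (hExp : ∀ x : ℝ, 0 ≤ x → P {ω | x < E ω} = ENNReal.ofReal (Real.exp (-x)))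
    (hIndep : IndepFun E (fun ω => (T1 ω, T2 ω)) P)
    (π : ℝ × ℝ → ℝ) (hπ : Measurable π) (hπle : ∀ w : ℝ × ℝ, π w ≤ max w.1 w.2)
    (z : ℝ) (hz : 0 ≤ z) :
    P {ω | z < E ω + π (T1 ω, T2 ω) - max (T1 ω) (T2 ω)}
      = ENNReal.ofReal (Real.exp (-z) *
          ∫ ω, Real.exp (π (T1 ω, T2 ω) - max (T1 ω) (T2 ω)) ∂P) := by
  set g : ℝ × ℝ → ℝ := fun w => z + max w.1 w.2 - π w with hg
  have hgm : Measurable g := ((measurable_const.add (measurable_fst.max measurable_snd)).sub hπ)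
  have hg0 : ∀ w, 0 ≤ g w := fun w => by
    have := hπle w; simp only [hg]; linarith
  have hW : Measurable fun ω => (T1 ω, T2 ω) := hT1.prodMk hT2
  have hset : {ω | z < E ω + π (T1 ω, T2 ω) - max (T1 ω) (T2 ω)}
      = {ω | g (T1 ω, T2 ω) < E ω} := by
    ext ω; simp only [mem_setOf_eq, hg]; constructor <;> intro h <;> linarith
  have hMeasF : Measurable fun ω => Real.exp (π (T1 ω, T2 ω) - max (T1 ω) (T2 ω)) :=
    Real.measurable_exp.comp ((hπ.comp hW).sub (hT1.max hT2))
  have hbd : ∀ ω, Real.exp (π (T1 ω, T2 ω) - max (T1 ω) (T2 ω)) ≤ 1 := fun ω =>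
    Real.exp_le_one_iff.mpr (sub_nonpos.mpr (hπle (T1 ω, T2 ω)))
  have hint : Integrable (fun ω => Real.exp (π (T1 ω, T2 ω) - max (T1 ω) (T2 ω))) P :=
    btd_integrable_of_le_one P hMeasF (fun ω => (Real.exp_pos _).le) hbd
  rw [hset, btd_tail_indep P E _ hE hW hExp hIndep g hgm hg0]
  have hpt : ∀ ω, ENNReal.ofReal (Real.exp (-(g (T1 ω, T2 ω))))
      = ENNReal.ofReal (Real.exp (-z))
        * ENNReal.ofReal (Real.exp (π (T1 ω, T2 ω) - max (T1 ω) (T2 ω))) := by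
    intro ω
    rw [← ENNReal.ofReal_mul (Real.exp_nonneg _), ← Real.exp_add]
    congr 2
    simp only [hg]; ring
  simp_rw [hpt]
  rw [lintegral_const_mul' _ _ ENNReal.ofReal_ne_top,
    ← ofReal_integral_eq_lintegral_ofReal hint (ae_of_all _ fun ω => (Real.exp_pos _).le),
    ← ENNReal.ofReal_mul (Real.exp_nonneg _)]

lemma btd_tail_joint (hE : Measurable E) (hT1 : Measurable T1) (hT2 : Measurable T2)
    (hExp : ∀ x : ℝ, 0 ≤ x → P {ω | x < E ω} = ENNReal.ofReal (Real.exp (-x)))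
    (hIndep : IndepFun E (fun ω => (T1 ω, T2 ω)) P)
    (u1 u2 : ℝ) (h1 : 0 ≤ u1) (h2 : 0 ≤ u2) :
    P ({ω | u1 < E ω + T1 ω - max (T1 ω) (T2 ω)} ∩ {ω | u2 < E ω + T2 ω - max (T1 ω) (T2 ω)})
      = ENNReal.ofReal (∫ ω, min
          (Real.exp (-u1) * Real.exp (T1 ω - max (T1 ω) (T2 ω)))
          (Real.exp (-u2) * Real.exp (T2 ω - max (T1 ω) (T2 ω))) ∂P) := by
  set g : ℝ × ℝ → ℝ := fun w => max (u1 + max w.1 w.2 - w.1) (u2 + max w.1 w.2 - w.2) with hg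
  have hgm : Measurable g :=
    ((measurable_const.add (measurable_fst.max measurable_snd)).sub measurable_fst).max
      ((measurable_const.add (measurable_fst.max measurable_snd)).sub measurable_snd)
  have hg0 : ∀ w : ℝ × ℝ, 0 ≤ g w := fun w => by
    have h3 := le_max_left w.1 w.2
    have h4 := le_max_left (u1 + max w.1 w.2 - w.1) (u2 + max w.1 w.2 - w.2)
    simp only [hg]; linarith
  have hW : Measurable fun ω => (T1 ω, T2 ω) := hT1.prodMk hT2
  have hset : {ω | u1 < E ω + T1 ω - max (T1 ω) (T2 ω)}
        ∩ {ω | u2 < E ω + T2 ω - max (T1 ω) (T2 ω)}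
      = {ω | g (T1 ω, T2 ω) < E ω} := by
    ext ω
    simp only [mem_inter_iff, mem_setOf_eq, hg, max_lt_iff]
    constructor <;> rintro ⟨a, b⟩ <;> exact ⟨by linarith, by linarith⟩
  have hpt : ∀ ω, Real.exp (-(g (T1 ω, T2 ω)))
      = min (Real.exp (-u1) * Real.exp (T1 ω - max (T1 ω) (T2 ω)))
          (Real.exp (-u2) * Real.exp (T2 ω - max (T1 ω) (T2 ω))) := by
    intro ω
    rw [hg]
    rw [btd_exp_max_min]
    congr 1 <;> rw [← Real.exp_add] <;> congr 1 <;> ring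
  have hMeasF : Measurable fun ω => min
      (Real.exp (-u1) * Real.exp (T1 ω - max (T1 ω) (T2 ω)))
      (Real.exp (-u2) * Real.exp (T2 ω - max (T1 ω) (T2 ω))) :=
    ((Real.measurable_exp.comp (hT1.sub (hT1.max hT2))).const_mul _).min
      ((Real.measurable_exp.comp (hT2.sub (hT1.max hT2))).const_mul _)
  have hbd : ∀ ω, min (Real.exp (-u1) * Real.exp (T1 ω - max (T1 ω) (T2 ω)))
      (Real.exp (-u2) * Real.exp (T2 ω - max (T1 ω) (T2 ω))) ≤ 1 := by
    intro ω
    refine le_trans (min_le_left _ _) ?_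
    have ha : Real.exp (-u1) ≤ 1 := Real.exp_le_one_iff.mpr (by linarith)
    have hb : Real.exp (T1 ω - max (T1 ω) (T2 ω)) ≤ 1 :=
      Real.exp_le_one_iff.mpr (sub_nonpos.mpr (le_max_left _ _))
    nlinarith [Real.exp_pos (-u1), Real.exp_pos (T1 ω - max (T1 ω) (T2 ω))]
  have hnn : ∀ ω, 0 ≤ min (Real.exp (-u1) * Real.exp (T1 ω - max (T1 ω) (T2 ω)))
      (Real.exp (-u2) * Real.exp (T2 ω - max (T1 ω) (T2 ω))) := fun ω =>
    le_min (by positivity) (by positivity)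
  have hint := btd_integrable_of_le_one P hMeasF hnn hbd
  rw [hset, btd_tail_indep P E _ hE hW hExp hIndep g hgm hg0]
  simp_rw [hpt]
  rw [← ofReal_integral_eq_lintegral_ofReal hint (ae_of_all _ hnn)]

end BTDHelpers

theorem bivariate_tail_dependence_coefficient
    {Ω : Type*} [MeasurableSpace Ω] (P : Measure Ω) [IsProbabilityMeasure P]
    (E T1 T2 : Ω → ℝ) (hE : Measurable E) (hT1 : Measurable T1) (hT2 : Measurable T2)
    (hExp : ∀ x : ℝ, 0 ≤ x → P {ω | x < E ω} = ENNReal.ofReal (Real.exp (-x)))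
    (hIndep : IndepFun E (fun ω => (T1 ω, T2 ω)) P)
    (Z1 Z2 : Ω → ℝ)
    (hZ1 : Z1 = fun ω => E ω + T1 ω - max (T1 ω) (T2 ω))
    (hZ2 : Z2 = fun ω => E ω + T2 ω - max (T1 ω) (T2 ω))
    (V1 V2 : Ω → ℝ)
    (hV1 : V1 = fun ω => Real.exp (T1 ω - max (T1 ω) (T2 ω)) /
      ∫ ω', Real.exp (T1 ω' - max (T1 ω') (T2 ω')) ∂P)
    (hV2 : V2 = fun ω => Real.exp (T2 ω - max (T1 ω) (T2 ω)) /
      ∫ ω', Real.exp (T2 ω' - max (T1 ω') (T2 ω')) ∂P)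
    (qstar : ℝ)
    (hqstar : qstar = sInf {q : ℝ | q ∈ Set.Ioo (0 : ℝ) 1 ∧
      0 < quantileFun P Z1 q ∧ 0 < quantileFun P Z2 q}) :
    (∀ q ∈ Set.Ioo qstar 1,
      0 < P {ω | quantileFun P Z2 q < Z2 ω} ∧
      (ProbabilityTheory.cond P {ω | quantileFun P Z2 q < Z2 ω})
          {ω | quantileFun P Z1 q < Z1 ω}
        = ENNReal.ofReal (∫ ω, min (V1 ω) (V2 ω) ∂P)) ∧
    Filter.Tendsto
      (fun q => ((ProbabilityTheory.cond P {ω | quantileFun P Z2 q < Z2 ω})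
          {ω | quantileFun P Z1 q < Z1 ω}).toReal)
      (nhdsWithin 1 (Set.Iio 1))
      (nhds (∫ ω, min (V1 ω) (V2 ω) ∂P)) := by
  have hZm1 : Measurable Z1 := by rw [hZ1]; exact (hE.add hT1).sub (hT1.max hT2)
  have hZm2 : Measurable Z2 := by rw [hZ2]; exact (hE.add hT2).sub (hT1.max hT2)
  set c1 : ℝ := ∫ ω', Real.exp (T1 ω' - max (T1 ω') (T2 ω')) ∂P with hc1d
  set c2 : ℝ := ∫ ω', Real.exp (T2 ω' - max (T1 ω') (T2 ω')) ∂P with hc2d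
  have hm1 : Measurable fun ω => Real.exp (T1 ω - max (T1 ω) (T2 ω)) :=
    Real.measurable_exp.comp (hT1.sub (hT1.max hT2))
  have hm2 : Measurable fun ω => Real.exp (T2 ω - max (T1 ω) (T2 ω)) :=
    Real.measurable_exp.comp (hT2.sub (hT1.max hT2))
  have hint1 : Integrable (fun ω => Real.exp (T1 ω - max (T1 ω) (T2 ω))) P :=
    btd_integrable_of_le_one P hm1 (fun ω => (Real.exp_pos _).le)
      (fun ω => Real.exp_le_one_iff.mpr (sub_nonpos.mpr (le_max_left _ _)))
  have hint2 : Integrable (fun ω => Real.exp (T2 ω - max (T1 ω) (T2 ω))) P :=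
    btd_integrable_of_le_one P hm2 (fun ω => (Real.exp_pos _).le)
      (fun ω => Real.exp_le_one_iff.mpr (sub_nonpos.mpr (le_max_right _ _)))
  have hc1pos : 0 < c1 := by
    rw [hc1d, integral_pos_iff_support_of_nonneg_ae
      (ae_of_all _ fun ω => (Real.exp_pos _).le) hint1]
    have hsupp : Function.support (fun ω' => Real.exp (T1 ω' - max (T1 ω') (T2 ω')))
        = Set.univ := Set.eq_univ_of_forall fun ω => (Real.exp_pos _).ne'
    rw [hsupp]
    simp
  have hc2pos : 0 < c2 := by
    rw [hc2d, integral_pos_iff_support_of_nonneg_ae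
      (ae_of_all _ fun ω => (Real.exp_pos _).le) hint2]
    have hsupp : Function.support (fun ω' => Real.exp (T2 ω' - max (T1 ω') (T2 ω')))
        = Set.univ := Set.eq_univ_of_forall fun ω => (Real.exp_pos _).ne'
    rw [hsupp]
    simp
  have hc1le : c1 ≤ 1 := by
    rw [hc1d]
    have h := integral_mono hint1 (integrable_const (1:ℝ))
      (fun ω => Real.exp_le_one_iff.mpr (sub_nonpos.mpr (le_max_left _ _)))
    simpa using h
  have hc2le : c2 ≤ 1 := by
    rw [hc2d]
    have h := integral_mono hint2 (integrable_const (1:ℝ))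
      (fun ω => Real.exp_le_one_iff.mpr (sub_nonpos.mpr (le_max_right _ _)))
    simpa using h
  have htail1 : ∀ z : ℝ, 0 ≤ z →
      P {ω | z < Z1 ω} = ENNReal.ofReal (Real.exp (-z) * c1) := by
    intro z hz
    simp only [hZ1, hc1d]
    exact btd_tail_marginal P E T1 T2 hE hT1 hT2 hExp hIndep Prod.fst measurable_fst
      (fun w => le_max_left _ _) z hz
  have htail2 : ∀ z : ℝ, 0 ≤ z →
      P {ω | z < Z2 ω} = ENNReal.ofReal (Real.exp (-z) * c2) := by
    intro z hz
    simp only [hZ2, hc2d]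
    exact btd_tail_marginal P E T1 T2 hE hT1 hT2 hExp hIndep Prod.snd measurable_snd
      (fun w => le_max_right _ _) z hz
  have hFgen : ∀ (Zf : Ω → ℝ) (c : ℝ), Measurable Zf → 0 < c → c ≤ 1 →
      (∀ z : ℝ, 0 ≤ z → P {ω | z < Zf ω} = ENNReal.ofReal (Real.exp (-z) * c)) →
      ∀ z, 0 ≤ z → distFun P Zf z = 1 - Real.exp (-z) * c := by
    intro Zf c hZm hcpos hcle htail z hz
    have hcompl : {ω | Zf ω ≤ z} = {ω | z < Zf ω}ᶜ := by
      ext ω; simp [not_lt]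
    have hle1 : Real.exp (-z) * c ≤ 1 := by
      have h := Real.exp_le_one_iff.mpr (neg_nonpos.mpr hz)
      nlinarith [Real.exp_pos (-z)]
    rw [distFun, hcompl, prob_compl_eq_one_sub (measurableSet_lt measurable_const hZm),
      htail z hz, ENNReal.toReal_sub_of_le (ENNReal.ofReal_le_one.mpr hle1) ENNReal.one_ne_top,
      ENNReal.toReal_one, ENNReal.toReal_ofReal (by positivity)]
  have hF1 := hFgen Z1 c1 hZm1 hc1pos hc1le htail1
  have hF2 := hFgen Z2 c2 hZm2 hc2pos hc2le htail2
  have hjoint : ∀ u1 u2 : ℝ, 0 ≤ u1 → 0 ≤ u2 →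
      P ({ω | u1 < Z1 ω} ∩ {ω | u2 < Z2 ω})
        = ENNReal.ofReal (∫ ω, min
            (Real.exp (-u1) * Real.exp (T1 ω - max (T1 ω) (T2 ω)))
            (Real.exp (-u2) * Real.exp (T2 ω - max (T1 ω) (T2 ω))) ∂P) := by
    intro u1 u2 h1 h2
    simp only [hZ1, hZ2]
    exact btd_tail_joint P E T1 T2 hE hT1 hT2 hExp hIndep u1 u2 h1 h2
  set S : Set ℝ := {q : ℝ | q ∈ Set.Ioo (0 : ℝ) 1 ∧
      0 < quantileFun P Z1 q ∧ 0 < quantileFun P Z2 q} with hSd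
  subst hqstar
  have hq1mem : (1 + max (1 - c1) (1 - c2)) / 2 ∈ S := by
    have ha : 1 - c1 < (1 + max (1 - c1) (1 - c2)) / 2 := by
      have h := le_max_left (1 - c1) (1 - c2)
      have h2 := le_max_right (1 - c1) (1 - c2)
      have hm1lt : max (1 - c1) (1 - c2) < 1 := max_lt (by linarith) (by linarith)
      linarith
    have hb : 1 - c2 < (1 + max (1 - c1) (1 - c2)) / 2 := by
      have h := le_max_right (1 - c1) (1 - c2)
      have hm1lt : max (1 - c1) (1 - c2) < 1 := max_lt (by linarith) (by linarith)
      linarith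
    have hm0 : 0 ≤ max (1 - c1) (1 - c2) := le_trans (by linarith) (le_max_left _ _)
    have hm1lt : max (1 - c1) (1 - c2) < 1 := max_lt (by linarith) (by linarith)
    have hlt1 : (1 + max (1 - c1) (1 - c2)) / 2 < 1 := by linarith
    refine ⟨⟨by linarith, hlt1⟩, ?_, ?_⟩
    · obtain ⟨heq, hpos⟩ := btd_quantileFun_eq_log P hc1pos hF1 ha hlt1
      rw [heq]; exact hpos
    · obtain ⟨heq, hpos⟩ := btd_quantileFun_eq_log P hc2pos hF2 hb hlt1
      rw [heq]; exact hpos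
  have hSne : S.Nonempty := ⟨_, hq1mem⟩
  have hSbdd : BddBelow S := ⟨0, fun x hx => hx.1.1.le⟩
  have hstarlt1 : sInf S < 1 := by
    refine lt_of_le_of_lt (csInf_le hSbdd hq1mem) ?_
    have hm1lt : max (1 - c1) (1 - c2) < 1 := max_lt (by linarith) (by linarith)
    linarith
  have hmain : ∀ q ∈ Set.Ioo (sInf S) 1,
      0 < P {ω | quantileFun P Z2 q < Z2 ω} ∧
      (ProbabilityTheory.cond P {ω | quantileFun P Z2 q < Z2 ω})
          {ω | quantileFun P Z1 q < Z1 ω}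
        = ENNReal.ofReal (∫ ω, min (V1 ω) (V2 ω) ∂P) := by
    intro q hq
    obtain ⟨hqs, hq2⟩ := hq
    obtain ⟨q0, hq0S, hq0lt⟩ := exists_lt_of_csInf_lt hSne hqs
    obtain ⟨⟨hq00, hq01⟩, hq0p1, hq0p2⟩ := hq0S
    have h1q : 0 < 1 - q := by linarith
    have hp1 : 0 < quantileFun P Z1 q := by
      refine lt_of_lt_of_le hq0p1 ?_
      rw [quantileFun, quantileFun]
      exact csInf_le_csInf (btd_quantile_bddBelow P hq0p1)
        (btd_quantile_set_nonempty P hc1pos hF1 hq2) (fun z hz => le_trans hq0lt.le hz)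
    have hp2 : 0 < quantileFun P Z2 q := by
      refine lt_of_lt_of_le hq0p2 ?_
      rw [quantileFun, quantileFun]
      exact csInf_le_csInf (btd_quantile_bddBelow P hq0p2)
        (btd_quantile_set_nonempty P hc2pos hF2 hq2) (fun z hz => le_trans hq0lt.le hz)
    have hcq1 : 1 - c1 < q := by
      by_contra hcon
      push_neg at hcon
      have h := btd_quantile_pos_imp P hF1 hcon
      linarith
    have hcq2 : 1 - c2 < q := by
      by_contra hcon
      push_neg at hcon
      have h := btd_quantile_pos_imp P hF2 hcon
      linarith
    obtain ⟨hu1, hr1pos⟩ := btd_quantileFun_eq_log P hc1pos hF1 hcq1 hq2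
    obtain ⟨hu2, hr2pos⟩ := btd_quantileFun_eq_log P hc2pos hF2 hcq2 hq2
    have hPB : P {ω | quantileFun P Z2 q < Z2 ω} = ENNReal.ofReal (1 - q) := by
      rw [hu2, htail2 _ hr2pos.le, btd_exp_neg_log hc2pos h1q,
        div_mul_cancel₀ _ hc2pos.ne']
    refine ⟨?_, ?_⟩
    · rw [hPB]
      exact ENNReal.ofReal_pos.mpr h1q
    · have hBmeas : MeasurableSet {ω | quantileFun P Z2 q < Z2 ω} :=
        measurableSet_lt measurable_const hZm2
      rw [cond_apply hBmeas, Set.inter_comm, hPB, hu1, hu2,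
        hjoint _ _ hr1pos.le hr2pos.le]
      have hIeq : (∫ ω, min
            (Real.exp (-(Real.log (c1 / (1 - q)))) * Real.exp (T1 ω - max (T1 ω) (T2 ω)))
            (Real.exp (-(Real.log (c2 / (1 - q)))) * Real.exp (T2 ω - max (T1 ω) (T2 ω))) ∂P)
          = (1 - q) * ∫ ω, min (V1 ω) (V2 ω) ∂P := by
        rw [← integral_const_mul]
        refine integral_congr_ae (Filter.Eventually.of_forall fun ω => ?_)
        simp only [hV1, hV2, hc1d, hc2d]
        rw [btd_exp_neg_log hc1pos h1q, btd_exp_neg_log hc2pos h1q,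
          mul_min_of_nonneg _ _ (by linarith : (0:ℝ) ≤ 1 - q)]
        rw [← hc1d, ← hc2d]
        congr 1 <;> rw [div_mul_eq_mul_div, mul_div_assoc]
      rw [hIeq, ENNReal.ofReal_mul (by linarith : (0:ℝ) ≤ 1 - q), ← mul_assoc,
        ENNReal.inv_mul_cancel (ENNReal.ofReal_pos.mpr h1q).ne' ENNReal.ofReal_ne_top,
        one_mul]
  refine ⟨hmain, ?_⟩
  have hI0 : 0 ≤ ∫ ω, min (V1 ω) (V2 ω) ∂P := by
    refine integral_nonneg fun ω => le_min ?_ ?_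
    · simp only [hV1, hc1d]
      rw [← hc1d]
      exact div_nonneg (Real.exp_nonneg _) hc1pos.le
    · simp only [hV2, hc2d]
      rw [← hc2d]
      exact div_nonneg (Real.exp_nonneg _) hc2pos.le
  refine Filter.Tendsto.congr' ?_ tendsto_const_nhds
  filter_upwards [Ioo_mem_nhdsLT_of_mem (Set.mem_Ioc.mpr ⟨hstarlt1, le_refl 1⟩)] with q hq
  rw [(hmain q hq).2, ENNReal.toReal_ofReal hI0]
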